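/- Let f(z) = Σ_{n≥0} a_n z^n be a power series with a_n ≥ 1 for all n, and suppose there is a constant C > 0 with f(r) ≤ C/(1−r) for all r ∈ (0,1). Then there exists a constant c₈ > 0, depending only on C, such that for every r ∈ (0,1) and every θ ∈ [−π, π), |f(r e^{iθ})| ≤ (1 − c₈ · r · min(|θ|, 1−r)²/(1−r)²) · f(r). -/

import Mathlib

lemma pair_abs (A B φ : ℝ) (hA : 0 < A) (hB : 0 < B) :
    ‖(A : ℂ) + (B : ℂ) * Complex.exp (φ * Complex.I)‖ ≤
      A + B - (1 - Real.cos φ) * (A * B / (A + B)) := by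
  have hAB : 0 < A + B := by linarith
  set D := (1 - Real.cos φ) * (A * B / (A + B)) with hDdef
  have hD : (A + B) * D = (1 - Real.cos φ) * (A * B) := by
    rw [hDdef]; field_simp
  have hcos1 : Real.cos φ ≤ 1 := Real.cos_le_one φ
  have hcosm : -1 ≤ Real.cos φ := Real.neg_one_le_cos φ
  have hDle : 0 ≤ A + B - D := by
    have h2 : (A + B) * D ≤ (A + B) * (A + B) := by nlinarith [sq_nonneg (A - B)]
    have := le_of_mul_le_mul_left h2 hAB
    linarith
  have habs2 : (‖(A : ℂ) + (B : ℂ) * Complex.exp (φ * Complex.I)‖) ^ 2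
      = A ^ 2 + B ^ 2 + 2 * A * B * Real.cos φ := by
    rw [Complex.sq_norm, Complex.exp_mul_I]
    simp [Complex.normSq_apply, Complex.cos_ofReal_re, Complex.sin_ofReal_re]
    nlinarith [Real.sin_sq_add_cos_sq φ]
  have hsq : (‖(A : ℂ) + (B : ℂ) * Complex.exp (φ * Complex.I)‖) ^ 2
      ≤ (A + B - D) ^ 2 := by
    nlinarith [sq_nonneg D, hD]
  have h := Real.sqrt_le_sqrt hsq
  rwa [Real.sqrt_sq (norm_nonneg _), Real.sqrt_sq hDle] at h

lemma one_sub_cos_ge (y : ℝ) (h0 : 0 ≤ y) (h1 : y ≤ 1 + Real.pi) :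
    (1 / 5) * min 1 (y ^ 2) ≤ 1 - Real.cos y := by
  have key : ∀ w : ℝ, 0 < w → w ≤ 1 → (2/5) * w ^ 2 ≤ 1 - Real.cos w := by
    intro w hw0 hw1
    have hs : w / 2 - (w / 2) ^ 3 / 4 < Real.sin (w / 2) :=
      by have h := Real.sin_gt_sub_cube (show 0 < w/2 by linarith); have : 0 ≤ (w/2)^3 := by positivity
         linarith
    have hcos : Real.cos w = 1 - 2 * Real.sin (w / 2) ^ 2 := by
      have h3 : Real.cos (2 * (w / 2)) = Real.cos (w/2) ^ 2 - Real.sin (w/2) ^ 2 :=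
        Real.cos_two_mul' (w / 2)
      have h2 := Real.sin_sq_add_cos_sq (w / 2)
      rw [show 2 * (w / 2) = w by ring] at h3
      linarith
    have hw3 : w ^ 3 ≤ w := by
      nlinarith [mul_nonneg (mul_nonneg hw0.le (sub_nonneg.mpr hw1)) (by linarith : (0:ℝ) ≤ 1 + w)]
    have hslb : (15/32) * w ≤ Real.sin (w / 2) := by nlinarith
    have hsnn : 0 ≤ Real.sin (w/2) := by nlinarith
    rw [hcos]
    nlinarith
  rcases le_or_gt y 1 with hy | hy
  · rcases eq_or_lt_of_le h0 with h | h
    · simp [← h]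
    · have := key y h hy
      have hmin : min 1 (y ^ 2) ≤ y ^ 2 := min_le_right _ _
      have : 0 ≤ min 1 (y^2) := le_min (by norm_num) (by positivity)
      nlinarith [key y h hy, min_le_right 1 (y^2)]
  · have hπ : Real.pi > 3 := Real.pi_gt_three
    have hmin : min 1 (y ^ 2) ≤ 1 := min_le_left _ _
    have hc : Real.cos y ≤ 4/5 := by
      rcases le_or_gt y Real.pi with hyp | hyp
      · have h1' : Real.cos y ≤ Real.cos 1 :=
          Real.cos_le_cos_of_nonneg_of_le_pi (by norm_num) hyp hy.le
        have := key 1 (by norm_num) (by norm_num)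
        have hc1 : Real.cos 1 ≤ 1 - 2/5 := by linarith
        linarith
      · have : Real.cos y ≤ 0 :=
          Real.cos_nonpos_of_pi_div_two_le_of_le (by linarith) (by linarith)
        linarith
    nlinarith

lemma pow_ge_small (r : ℝ) (N : ℕ) (h1 : 1/2 ≤ r) (h2 : r < 1)
    (h3 : (N : ℝ) * (1 - r) ≤ 3/2) : 1/21 ≤ r ^ N := by
  set x := 1 - r with hx
  have hx0 : 0 < x := by simp [hx]; linarith
  have hx12 : x ≤ 1/2 := by simp [hx]; linarith
  have hexp : Real.exp (-(2*x)) ≤ r := by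
    have h4 : 1 + 2*x ≤ Real.exp (2*x) := by
      have := Real.add_one_le_exp (2*x); linarith
    have h5 : Real.exp (-(2*x)) = (Real.exp (2*x))⁻¹ := by
      rw [Real.exp_neg]
    rw [h5]
    have h6 : (Real.exp (2*x))⁻¹ ≤ (1 + 2*x)⁻¹ := by
      apply inv_anti₀ (by linarith) h4
    have h7 : (1 + 2*x)⁻¹ ≤ 1 - x := by
      rw [inv_le_iff_one_le_mul₀ (by linarith)]
      nlinarith
    have : r = 1 - x := by simp [hx]
    linarith
  have hpow : Real.exp (-(2*x)) ^ N ≤ r ^ N :=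
    pow_le_pow_left₀ (Real.exp_pos _).le hexp N
  have heq : Real.exp (-(2*x)) ^ N = Real.exp (-(2*x*N)) := by
    rw [← Real.exp_nat_mul]; ring_nf
  have h8 : Real.exp (-3) ≤ Real.exp (-(2*x*N)) := by
    apply Real.exp_le_exp.mpr; nlinarith
  have h9 : (1:ℝ)/21 ≤ Real.exp (-3) := by
    rw [Real.exp_neg]
    rw [show (3:ℝ) = (3:ℕ) * 1 by norm_num, Real.exp_nat_mul]
    have := Real.exp_one_lt_d9
    have he : Real.exp 1 ≤ 2.72 := by linarith
    have hp : Real.exp 1 ^ (3:ℕ) ≤ 21 := by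
      calc Real.exp 1 ^ (3:ℕ) ≤ 2.72 ^ (3:ℕ) := pow_le_pow_left₀ (Real.exp_pos 1).le he 3
        _ ≤ 21 := by norm_num
    have hpos : (0:ℝ) < Real.exp 1 ^ (3:ℕ) := by positivity
    rw [div_le_iff₀ (by norm_num), inv_mul_eq_div, le_div_iff₀ hpos]
    linarith
  calc (1:ℝ)/21 ≤ Real.exp (-3) := h9
    _ ≤ Real.exp (-(2*x*N)) := h8
    _ = Real.exp (-(2*x)) ^ N := heq.symm
    _ ≤ r ^ N := hpow

lemma series_bound (a : ℕ → ℝ) (ha : ∀ n, 1 ≤ a n) (r θ : ℝ) (hr0 : 0 < r) (hr1 : r < 1)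
    (hsum : Summable (fun n => a n * r ^ n)) (N : ℕ) (hN : 1 ≤ N) :
    ‖∑' n : ℕ, (a n : ℂ) * ((r : ℂ) * Complex.exp (θ * Complex.I)) ^ n‖ ≤
      (∑' n : ℕ, a n * r ^ n) -
        (1 - Real.cos (N * θ)) / 2 * (r ^ N * (1 - r ^ 2)⁻¹) := by
  set u : ℕ → ℝ := fun n => a n * r ^ n with hu
  set F : ℕ → ℂ := fun n => (a n : ℂ) * ((r : ℂ) * Complex.exp (θ * Complex.I)) ^ n with hF
  set c' : ℝ := (1 - Real.cos (N * θ)) / 2 with hc'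
  have hc'0 : 0 ≤ c' := by
    have := Real.cos_le_one ((N : ℝ) * θ); rw [hc']; linarith
  have hupos : ∀ n, 0 < u n := fun n => by
    have := ha n; have := pow_pos hr0 n; simp only [hu]; nlinarith
  have hrle : ∀ n, r ^ n ≤ u n := fun n => by
    have := ha n; have := pow_pos hr0 n; simp only [hu]; nlinarith
  have hFeq : ∀ k : ℕ, F k = ((u k : ℝ) : ℂ) * Complex.exp (((k * θ : ℝ) : ℂ) * Complex.I) := by
    intro k
    simp only [hF, hu]
    rw [mul_pow, ← Complex.exp_nat_mul]
    push_cast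
    ring_nf
  have hpair : ∀ n : ℕ, ‖F n + F (n + N)‖ ≤ u n + u (n + N) - c' * r ^ (n + N) := by
    intro n
    have hA := hupos n
    have hB := hupos (n + N)
    have hsplit : F n + F (n + N) =
        Complex.exp (((n * θ : ℝ) : ℂ) * Complex.I) *
          (((u n : ℝ) : ℂ) + ((u (n + N) : ℝ) : ℂ) *
            Complex.exp (((N * θ : ℝ) : ℂ) * Complex.I)) := by
      rw [hFeq n, hFeq (n + N)]
      rw [show ((((n + N : ℕ) * θ : ℝ)) : ℂ) * Complex.I
            = ((n * θ : ℝ) : ℂ) * Complex.I + ((N * θ : ℝ) : ℂ) * Complex.I by push_cast; ring]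
      rw [Complex.exp_add]; ring
    rw [hsplit, norm_mul, Complex.norm_exp_ofReal_mul_I, one_mul]
    refine le_trans (pair_abs _ _ _ hA hB) ?_
    have hABpos : 0 < u n + u (n + N) := by linarith
    have h1 : r ^ n ≤ u n := hrle n
    have h2 : r ^ (n + N) ≤ u (n + N) := hrle (n + N)
    have h3 : r ^ (n + N) ≤ r ^ n := pow_le_pow_of_le_one hr0.le hr1.le (by omega)
    have hrpos : 0 < r ^ (n + N) := pow_pos hr0 _
    have h4 : r ^ (n + N) / 2 ≤ u n * u (n + N) / (u n + u (n + N)) := by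
      rw [div_le_div_iff₀ (by norm_num) hABpos]
      nlinarith [mul_le_mul_of_nonneg_left h2 (le_of_lt hA),
        mul_le_mul_of_nonneg_right (h3.trans h1) (le_of_lt hB)]
    have h5 : c' * r ^ (n + N) ≤ (1 - Real.cos (N * θ)) * (u n * u (n + N) / (u n + u (n + N))) := by
      have : c' * r ^ (n + N) = (1 - Real.cos (N * θ)) * (r ^ (n + N) / 2) := by
        rw [hc']; ring
      rw [this]
      exact mul_le_mul_of_nonneg_left h4 (by linarith [hc'0, hc'.ge])
    linarith
  have key : ∀ K : ℕ, ‖∑ n ∈ Finset.range (2 * K * N), F n‖ ≤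
      (∑ n ∈ Finset.range (2 * K * N), u n) - c' * ∑ p ∈ Finset.range (K * N), r ^ (2 * p + N) := by
    intro K
    induction K with
    | zero => simp
    | succ K ih =>
      have e1 : 2 * (K + 1) * N = 2 * K * N + (N + N) := by ring
      have e2 : (K + 1) * N = K * N + N := by ring
      rw [e1, e2]
      rw [Finset.sum_range_add F (2 * K * N) (N + N),
          Finset.sum_range_add u (2 * K * N) (N + N),
          Finset.sum_range_add (fun p => r ^ (2 * p + N)) (K * N) N,
          Finset.sum_range_add (fun i => F (2 * K * N + i)) N N,
          Finset.sum_range_add (fun i => u (2 * K * N + i)) N N]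
      have hblock : ‖∑ i ∈ Finset.range N, F (2 * K * N + i)
            + ∑ i ∈ Finset.range N, F (2 * K * N + (N + i))‖ ≤
          ∑ i ∈ Finset.range N, (u (2 * K * N + i) + u (2 * K * N + (N + i))
            - c' * r ^ (2 * (K * N + i) + N)) := by
        rw [← Finset.sum_add_distrib]
        refine le_trans (norm_sum_le _ _) (Finset.sum_le_sum fun i _ => ?_)
        have hidx : 2 * K * N + (N + i) = (2 * K * N + i) + N := by omega
        rw [hidx]
        refine le_trans (hpair (2 * K * N + i)) ?_
        have hexp : (2 * K * N + i) + N ≤ 2 * (K * N + i) + N := by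
          have h7 : 2 * (K * N + i) + N = ((2 * K * N + i) + N) + i := by ring
          rw [h7]; exact Nat.le_add_right _ _
        have hpow : r ^ (2 * (K * N + i) + N) ≤ r ^ ((2 * K * N + i) + N) :=
          pow_le_pow_of_le_one hr0.le hr1.le hexp
        have := mul_le_mul_of_nonneg_left hpow hc'0
        linarith
      have hsum_pairs : ∑ i ∈ Finset.range N, (u (2 * K * N + i) + u (2 * K * N + (N + i))
            - c' * r ^ (2 * (K * N + i) + N))
          = (∑ i ∈ Finset.range N, u (2 * K * N + i)
              + ∑ i ∈ Finset.range N, u (2 * K * N + (N + i)))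
            - c' * ∑ i ∈ Finset.range N, r ^ (2 * (K * N + i) + N) := by
        rw [Finset.mul_sum, ← Finset.sum_add_distrib, ← Finset.sum_sub_distrib]
      refine le_trans (norm_add_le _ _) ?_
      have h6 := add_le_add ih hblock
      rw [hsum_pairs] at h6
      refine le_trans h6 (le_of_eq ?_)
      ring
  have hnormF : ∀ n, ‖F n‖ = u n := by
    intro n
    simp [hF, hu, norm_mul, map_mul, map_pow, Complex.norm_real,
      Complex.norm_exp_ofReal_mul_I, abs_of_nonneg (by linarith [ha n] : (0:ℝ) ≤ a n),
      abs_of_nonneg hr0.le]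
  have hFs : Summable F := summable_norm_iff.mp (by simpa only [hnormF] using hsum)
  have hNtend : Filter.Tendsto (fun K : ℕ => 2 * K * N) Filter.atTop Filter.atTop := by
    apply Filter.tendsto_atTop_mono (f := fun K : ℕ => K)
    · intro K
      calc K = K * 1 := (mul_one K).symm
        _ ≤ 2 * K * N := by
            rw [show 2 * K * N = K * (2 * N) by ring]
            exact Nat.mul_le_mul_left K (by omega)
    · exact Filter.tendsto_id
  have hNtend2 : Filter.Tendsto (fun K : ℕ => K * N) Filter.atTop Filter.atTop := by
    apply Filter.tendsto_atTop_mono (f := fun K : ℕ => K)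
    · intro K
      calc K = K * 1 := (mul_one K).symm
        _ ≤ K * N := Nat.mul_le_mul_left K hN
    · exact Filter.tendsto_id
  have hlhs : Filter.Tendsto (fun K : ℕ => ‖∑ n ∈ Finset.range (2 * K * N), F n‖)
      Filter.atTop (nhds ‖∑' n, F n‖) := by
    have h1 := hFs.hasSum.tendsto_sum_nat
    exact (continuous_norm.tendsto _).comp (h1.comp hNtend)
  have hgeom : HasSum (fun p : ℕ => r ^ (2 * p + N)) (r ^ N * (1 - r ^ 2)⁻¹) := by
    have h2 : HasSum (fun p : ℕ => (r ^ 2) ^ p) (1 - r ^ 2)⁻¹ :=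
      hasSum_geometric_of_lt_one (by positivity) (by nlinarith)
    have h3 := h2.mul_left (r ^ N)
    rw [show (fun p : ℕ => r ^ (2 * p + N)) = fun i => r ^ N * (r ^ 2) ^ i from
      funext fun p => by rw [pow_add, ← pow_mul]; ring]
    exact h3
  have hrhs : Filter.Tendsto (fun K : ℕ => (∑ n ∈ Finset.range (2 * K * N), u n)
        - c' * ∑ p ∈ Finset.range (K * N), r ^ (2 * p + N))
      Filter.atTop (nhds ((∑' n, u n) - c' * (r ^ N * (1 - r ^ 2)⁻¹))) := by
    refine Filter.Tendsto.sub ?_ (Filter.Tendsto.const_mul c' ?_)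
    · exact hsum.hasSum.tendsto_sum_nat.comp hNtend
    · exact hgeom.tendsto_sum_nat.comp hNtend2
  exact le_of_tendsto_of_tendsto' hlhs hrhs key


lemma red_case1 (C c₈ r θ m w : ℝ) (hC : 0 < C) (hc₈0 : 0 < c₈)
    (hπ3 : (3:ℝ) < Real.pi) (hc8C : c₈ * C * Real.pi ^ 2 = 1/1000)
    (hr0 : 0 < r) (hθπ : |θ| ≤ Real.pi)
    (hm0 : 0 ≤ m) (hmθ : m ≤ |θ|) (hw0 : 0 < w) (hw2 : w ≤ 2)
    (hcos5 : (1/5) * min 1 (θ ^ 2) ≤ 1 - Real.cos θ) :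
    c₈ * C * r * (m * w) ^ 2 ≤ (1 - Real.cos θ) * r / 4 := by
  have hπ0 : (0:ℝ) < Real.pi := by linarith
  have hsq : (m * w) ^ 2 ≤ 4 * θ ^ 2 := by
    have h1 : m * w ≤ |θ| * 2 := mul_le_mul hmθ hw2 hw0.le (abs_nonneg θ)
    nlinarith [mul_le_mul h1 h1 (mul_nonneg hm0 hw0.le) (by positivity : (0:ℝ) ≤ |θ| * 2),
      sq_abs θ]
  have hminm : θ ^ 2 ≤ Real.pi ^ 2 * min 1 (θ ^ 2) := by
    rcases min_cases 1 (θ ^ 2) with ⟨he, hle⟩ | ⟨he, hle⟩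
    · rw [he]; nlinarith [sq_abs θ, abs_nonneg θ]
    · rw [he]
      nlinarith [mul_nonneg (by nlinarith : (0:ℝ) ≤ Real.pi ^ 2 - 1) (sq_nonneg θ)]
  have hcosπ : θ ^ 2 ≤ 5 * Real.pi ^ 2 * (1 - Real.cos θ) := by
    nlinarith
  refine le_of_mul_le_mul_right ?_ (by positivity : (0:ℝ) < Real.pi ^ 2)
  have hL : c₈ * C * r * (m * w) ^ 2 * Real.pi ^ 2 ≤ (4/1000) * (r * θ ^ 2) := by
    have h1 : c₈ * C * r * (m * w) ^ 2 * Real.pi ^ 2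
        = (c₈ * C * Real.pi ^ 2) * (r * (m * w) ^ 2) := by ring
    rw [h1, hc8C]
    nlinarith [mul_le_mul_of_nonneg_left hsq hr0.le]
  have hR : (1/20) * (r * θ ^ 2) ≤ (1 - Real.cos θ) * r / 4 * Real.pi ^ 2 := by
    nlinarith [mul_le_mul_of_nonneg_left hcosπ hr0.le]
  nlinarith [mul_nonneg hr0.le (sq_nonneg θ)]

lemma red_case2 (C c₈ r θ m w t : ℝ) (N : ℕ) (hC : 0 < C) (hc₈0 : 0 < c₈)
    (hπ3 : (3:ℝ) < Real.pi) (hc8C : c₈ * C * Real.pi ^ 2 = 1/1000)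
    (hr0 : 0 < r) (hr1 : r < 1) (ht0 : 0 < t) (hθt : |θ| ≤ t)
    (hNt : 1 ≤ (N:ℝ) * t)
    (hrN : 1/21 ≤ r ^ N)
    (hmwt : m * w * t = |θ|) (hm0 : 0 ≤ m) (hw0 : 0 < w)
    (hcos5 : (1/5) * min 1 (((N:ℝ) * θ) ^ 2) ≤ 1 - Real.cos ((N:ℝ) * θ)) :
    c₈ * C * r * (m * w) ^ 2 ≤ (1 - Real.cos ((N:ℝ) * θ)) * r ^ N / 4 := by
  have hcosnn : 0 ≤ 1 - Real.cos ((N:ℝ) * θ) := by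
    have := Real.cos_le_one ((N:ℝ) * θ); linarith
  have hmint : θ ^ 2 ≤ t ^ 2 * min 1 (((N:ℝ) * θ) ^ 2) := by
    rcases min_cases 1 (((N:ℝ) * θ) ^ 2) with ⟨he, hle⟩ | ⟨he, hle⟩
    · rw [he]
      nlinarith [mul_le_mul hθt hθt (abs_nonneg θ) ht0.le, sq_abs θ]
    · rw [he]
      have h1 : 1 * θ ^ 2 ≤ ((N:ℝ) * t) ^ 2 * θ ^ 2 := by
        nlinarith [mul_nonneg (by nlinarith : (0:ℝ) ≤ ((N:ℝ) * t) ^ 2 - 1) (sq_nonneg θ)]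
      nlinarith [sq_nonneg θ]
  have hcost : θ ^ 2 ≤ 5 * t ^ 2 * (1 - Real.cos ((N:ℝ) * θ)) := by
    have h2 : min 1 (((N:ℝ) * θ) ^ 2) ≤ 5 * (1 - Real.cos ((N:ℝ) * θ)) := by linarith
    calc θ ^ 2 ≤ t ^ 2 * min 1 (((N:ℝ) * θ) ^ 2) := hmint
      _ ≤ t ^ 2 * (5 * (1 - Real.cos ((N:ℝ) * θ))) :=
          mul_le_mul_of_nonneg_left h2 (sq_nonneg t)
      _ = 5 * t ^ 2 * (1 - Real.cos ((N:ℝ) * θ)) := by ring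
  have hmwsq : (m * w) ^ 2 * t ^ 2 = θ ^ 2 := by
    have h1 : (m * w * t) ^ 2 = θ ^ 2 := by rw [hmwt, sq_abs]
    linear_combination h1
  have h5 : (m * w) ^ 2 ≤ 5 * (1 - Real.cos ((N:ℝ) * θ)) := by
    have h1 : (m * w) ^ 2 * t ^ 2 ≤ (5 * (1 - Real.cos ((N:ℝ) * θ))) * t ^ 2 := by
      rw [hmwsq]; linarith [hcost]
    exact le_of_mul_le_mul_right h1 (by positivity)
  have hcC0 : 0 < c₈ * C := mul_pos hc₈0 hC
  have hc8C2 : c₈ * C ≤ 1/9000 := by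
    have h9 : (9:ℝ) ≤ Real.pi ^ 2 := by nlinarith
    have h10 := mul_le_mul_of_nonneg_left h9 hcC0.le
    linarith
  have hLHS : c₈ * C * r * (m * w) ^ 2 ≤ (1/9000) * (5 * (1 - Real.cos ((N:ℝ) * θ))) := by
    have h1 : c₈ * C * r * (m * w) ^ 2 ≤ c₈ * C * (m * w) ^ 2 := by
      have h0 := mul_le_mul_of_nonneg_left hr1.le (mul_nonneg hcC0.le (sq_nonneg (m * w)))
      linarith [h0]
    have h2 : c₈ * C * (m * w) ^ 2 ≤ (1/9000) * (m * w) ^ 2 :=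
      mul_le_mul_of_nonneg_right hc8C2 (sq_nonneg (m * w))
    linarith [h5]
  have hRHS : (1/9000) * (5 * (1 - Real.cos ((N:ℝ) * θ)))
      ≤ (1 - Real.cos ((N:ℝ) * θ)) * r ^ N / 4 := by
    linarith [mul_le_mul_of_nonneg_left hrN hcosnn]
  linarith

set_option maxHeartbeats 2000000 in

/-- For a 1-lower bounded power series with `f(r) ≤ C/(1-r)` on `(0,1)`,
there is `c₈ > 0` depending only on `C` such that
`|f(re^{iθ})| ≤ (1 - c₈ r min(|θ|,1-r)²/(1-r)²) f(r)` for all `r ∈ (0,1)`, `θ ∈ [-π,π)`. -/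
theorem stmt7 (C : ℝ) (hC : 0 < C) :
    ∃ c₈ : ℝ, 0 < c₈ ∧
      ∀ a : ℕ → ℝ, (∀ n, 1 ≤ a n) →
        (∀ r : ℝ, r ∈ Set.Ioo (0 : ℝ) 1 → (∑' n : ℕ, a n * r ^ n) ≤ C / (1 - r)) →
        ∀ r : ℝ, r ∈ Set.Ioo (0 : ℝ) 1 → ∀ θ : ℝ, θ ∈ Set.Ico (-Real.pi) Real.pi →
          ‖∑' n : ℕ, (a n : ℂ) * ((r : ℂ) * Complex.exp (θ * Complex.I)) ^ n‖ ≤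
            (1 - c₈ * r * (min |θ| (1 - r)) ^ 2 / (1 - r) ^ 2) *
              ∑' n : ℕ, a n * r ^ n := by
  have hπ : (0:ℝ) < Real.pi := Real.pi_pos
  have hπ3 : (3:ℝ) < Real.pi := Real.pi_gt_three
  refine ⟨1 / (1000 * Real.pi ^ 2 * C), by positivity, ?_⟩
  intro a ha hf r hr θ hθ
  obtain ⟨hr0, hr1⟩ := hr
  obtain ⟨hθ1, hθ2⟩ := hθ
  set c₈ : ℝ := 1 / (1000 * Real.pi ^ 2 * C) with hc₈
  have hc₈0 : 0 < c₈ := by rw [hc₈]; positivity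
  have hc8C : c₈ * C * Real.pi ^ 2 = 1/1000 := by
    rw [hc₈]; field_simp
  by_cases hsum : Summable (fun n => a n * r ^ n)
  case neg =>
    have hFn : ¬ Summable (fun n => (a n : ℂ) * ((r:ℂ) * Complex.exp (θ * Complex.I)) ^ n) := by
      intro h
      apply hsum
      refine (summable_norm_iff.mpr h).congr fun n => ?_
      simp [norm_mul, map_mul, map_pow, Complex.norm_real,
        Complex.norm_exp_ofReal_mul_I, abs_of_nonneg (by linarith [ha n] : (0:ℝ) ≤ a n),
        abs_of_nonneg hr0.le]
    rw [tsum_eq_zero_of_not_summable hFn, tsum_eq_zero_of_not_summable hsum]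
    simp
  case pos =>
  set S : ℝ := ∑' n : ℕ, a n * r ^ n with hSdef
  have hxpos : (0:ℝ) < 1 - r := by linarith
  set w : ℝ := (1 - r)⁻¹ with hwdef
  have hw0 : 0 < w := by rw [hwdef]; positivity
  have hw1 : w * (1 - r) = 1 := by rw [hwdef]; field_simp
  have hS : S ≤ C * w := by
    have := hf r ⟨hr0, hr1⟩
    rw [hSdef, hwdef]
    rw [div_eq_mul_inv] at this
    exact this
  set m : ℝ := min |θ| (1 - r) with hmdef
  set t : ℝ := max |θ| (1 - r) with htdef
  have hm0 : 0 ≤ m := le_min (abs_nonneg θ) hxpos.le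
  have ht0 : 0 < t := lt_of_lt_of_le hxpos (le_max_right _ _)
  have hθπ : |θ| ≤ Real.pi := abs_le.mpr ⟨hθ1, hθ2.le⟩
  have hmθ : m ≤ |θ| := min_le_left _ _
  have hmx : m ≤ 1 - r := min_le_right _ _
  have hθt : |θ| ≤ t := le_max_left _ _
  have hxt : 1 - r ≤ t := le_max_right _ _
  have hmt : m * t = |θ| * (1 - r) := min_mul_max _ _
  set N : ℕ := if r ≤ 1/2 then 1 else ⌈1/t⌉₊ with hNdef
  have hN1 : 1 ≤ N := by
    rw [hNdef]; split
    · exact le_refl 1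
    · exact Nat.one_le_ceil_iff.mpr (by positivity)
  -- cosine bound, common
  have hcos1 : Real.cos ((N:ℝ) * θ) ≤ 1 := Real.cos_le_one _
  have hNθub : (N:ℝ) * |θ| ≤ 1 + Real.pi := by
    rw [hNdef]
    split
    · push_cast; linarith
    · rename_i h
      have hNub : (⌈1/t⌉₊ : ℝ) < 1/t + 1 := Nat.ceil_lt_add_one (by positivity)
      have h1 : (1/t) * |θ| ≤ 1 := by
        rw [div_mul_eq_mul_div, div_le_one ht0]
        linarith
      nlinarith [abs_nonneg θ]
  have hcos5 : (1/5) * min 1 (((N:ℝ) * θ)^2) ≤ 1 - Real.cos ((N:ℝ) * θ) := by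
    have hy : (N:ℝ) * |θ| = |(N:ℝ) * θ| := by
      rw [abs_mul, Nat.abs_cast]
    have h := one_sub_cos_ge ((N:ℝ) * |θ|) (by positivity) hNθub
    rw [hy, Real.cos_abs, sq_abs] at h
    exact h
  -- main analytic bound
  have hred : c₈ * C * r * (m * w)^2 ≤ (1 - Real.cos ((N:ℝ) * θ)) * r ^ N / 4 := by
    by_cases hr2 : r ≤ 1/2
    · have hNeq : N = 1 := by rw [hNdef, if_pos hr2]
      have hcos5' : (1/5) * min 1 (θ ^ 2) ≤ 1 - Real.cos θ := by
        have := hcos5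
        rw [hNeq] at this
        push_cast at this
        rw [one_mul] at this
        exact this
      have hw2 : w ≤ 2 := by
        rw [hwdef, inv_le_iff_one_le_mul₀ hxpos]
        linarith
      have h := red_case1 C c₈ r θ m w hC hc₈0 hπ3 hc8C hr0 hθπ hm0 hmθ hw0 hw2 hcos5'
      rw [hNeq]
      push_cast
      rw [one_mul, pow_one]
      exact h
    · have hNeq : N = ⌈1/t⌉₊ := by rw [hNdef, if_neg hr2]
      have hr12 : (1:ℝ)/2 ≤ r := by linarith [not_le.mp hr2]
      have hNlb : 1/t ≤ (N:ℝ) := by rw [hNeq]; exact Nat.le_ceil _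
      have hNub : (N:ℝ) < 1/t + 1 := by
        rw [hNeq]; exact Nat.ceil_lt_add_one (by positivity)
      have hrN : 1/21 ≤ r ^ N := by
        apply pow_ge_small r N hr12 hr1
        have h1 : (1/t) * (1 - r) ≤ 1 := by
          rw [div_mul_eq_mul_div, div_le_one ht0]; linarith
        nlinarith
      have hNt : 1 ≤ (N:ℝ) * t := by
        have h2 := mul_le_mul_of_nonneg_right hNlb ht0.le
        rw [div_mul_cancel₀] at h2
        · linarith
        · exact ne_of_gt ht0
      have hmwt : m * w * t = |θ| := by
        have h1 : m * w * t = (m * t) * w := by ring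
        rw [h1, hmt]
        have h2 : |θ| * (1-r) * w = |θ| * ((1-r) * w) := by ring
        rw [h2, show (1-r) * w = 1 by rw [mul_comm]; exact hw1, mul_one]
      exact red_case2 C c₈ r θ m w t N hC hc₈0 hπ3 hc8C hr0 hr1 ht0 hθt hNt hrN hmwt hm0 hw0 hcos5
  -- assemble
  have hkey := series_bound a ha r θ hr0 hr1 hsum N hN1
  have hcosnn : 0 ≤ 1 - Real.cos ((N:ℝ)*θ) := by linarith
  have hmain : c₈ * r * m^2 / (1-r)^2 * S ≤
      (1 - Real.cos ((N:ℝ)*θ)) / 2 * (r ^ N * (1 - r^2)⁻¹) := by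
    have hinv2 : w/2 ≤ (1 - r^2)⁻¹ := by
      have h1 : (0:ℝ) < 1 - r^2 := by nlinarith
      have h2 : 1 - r^2 ≤ 2 * (1 - r) := by nlinarith
      have h3 : (2 * (1-r))⁻¹ ≤ (1 - r^2)⁻¹ := inv_anti₀ h1 h2
      have h4 : (2 * (1-r))⁻¹ = w/2 := by
        rw [hwdef, mul_inv]; ring
      linarith
    have e1 : c₈ * r * m^2 / (1-r)^2 * S = c₈ * r * m^2 * w^2 * S := by
      rw [hwdef, div_eq_mul_inv, inv_pow]
    rw [e1]
    calc c₈ * r * m^2 * w^2 * S ≤ c₈ * r * m^2 * w^2 * (C * w) := by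
          apply mul_le_mul_of_nonneg_left hS
          positivity
      _ = (c₈ * C * r * (m*w)^2) * w := by ring
      _ ≤ ((1 - Real.cos ((N:ℝ)*θ)) * r ^ N / 4) * w :=
          mul_le_mul_of_nonneg_right hred hw0.le
      _ = ((1 - Real.cos ((N:ℝ)*θ)) / 2 * r ^ N) * (w / 2) := by ring
      _ ≤ ((1 - Real.cos ((N:ℝ)*θ)) / 2 * r ^ N) * (1 - r^2)⁻¹ := by
          apply mul_le_mul_of_nonneg_left hinv2
          positivity
      _ = (1 - Real.cos ((N:ℝ)*θ)) / 2 * (r ^ N * (1 - r^2)⁻¹) := by ring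
  calc ‖∑' n : ℕ, (a n : ℂ) * ((r : ℂ) * Complex.exp (θ * Complex.I)) ^ n‖
      ≤ S - (1 - Real.cos ((N:ℝ)*θ)) / 2 * (r ^ N * (1 - r^2)⁻¹) := hkey
    _ ≤ S - c₈ * r * m^2 / (1-r)^2 * S := by linarith
    _ = (1 - c₈ * r * m^2 / (1-r)^2) * S := by ring
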